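/- The improper integral ∫₀^∞ ds / (2 s^{3/2} + 3 s^{2/3}) is strictly greater than √(3/2) · arctan √(2/3) + (2/3) · log (5/2). -/

import Mathlib

open MeasureTheory Real Set Filter

private lemma aux_deriv_F (s : ℝ) (hs : 0 < s) :
    HasDerivAt (fun x : ℝ => Real.sqrt (3/2) * Real.arctan (Real.sqrt (2/3) * x ^ ((1:ℝ)/3)))
      ((2 * s ^ ((4:ℝ)/3) + 3 * s ^ ((2:ℝ)/3))⁻¹) s := by
  have h1 : HasDerivAt (fun x : ℝ => x ^ ((1:ℝ)/3)) ((1/3) * s ^ ((1:ℝ)/3 - 1)) s :=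
    Real.hasDerivAt_rpow_const (Or.inl hs.ne')
  have h2 := ((h1.const_mul (Real.sqrt (2/3))).arctan).const_mul (Real.sqrt (3/2))
  refine h2.congr_deriv ?_
  have hb : (0:ℝ) < s ^ ((2:ℝ)/3) := Real.rpow_pos_of_pos hs _
  have hsq : (Real.sqrt (2/3) * s ^ ((1:ℝ)/3)) ^ 2 = (2/3) * s ^ ((2:ℝ)/3) := by
    rw [mul_pow, Real.sq_sqrt (by norm_num : (0:ℝ) ≤ 2/3),
      ← Real.rpow_natCast (s ^ ((1:ℝ)/3)) 2, ← Real.rpow_mul hs.le]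
    norm_num
  have hss : Real.sqrt (3/2) * Real.sqrt (2/3) = 1 := by
    rw [← Real.sqrt_mul (by norm_num)]; norm_num
  have hinv : s ^ ((1:ℝ)/3 - 1) = (s ^ ((2:ℝ)/3))⁻¹ := by
    rw [← Real.rpow_neg hs.le]; norm_num
  have hc : s ^ ((4:ℝ)/3) = s ^ ((2:ℝ)/3) * s ^ ((2:ℝ)/3) := by
    rw [← Real.rpow_add hs]; norm_num
  rw [hsq, hinv, hc]
  field_simp
  ring_nf
  rw [hss]
  ring

private lemma aux_deriv_G (s : ℝ) (hs : 0 < s) :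
    HasDerivAt (fun x : ℝ => (1/3) * Real.log x - (2/3) * Real.log (2 * Real.sqrt x + 3))
      ((2 * s ^ ((3:ℝ)/2) + 3 * s)⁻¹) s := by
  have hr : Real.sqrt s * Real.sqrt s = s := Real.mul_self_sqrt hs.le
  have hrp : 0 < Real.sqrt s := Real.sqrt_pos.2 hs
  have h1 : HasDerivAt Real.log s⁻¹ s := Real.hasDerivAt_log hs.ne'
  have h2 : HasDerivAt (fun x : ℝ => 2 * Real.sqrt x + 3) (2 * (1 / (2 * Real.sqrt s))) s :=
    ((Real.hasDerivAt_sqrt hs.ne').const_mul 2).add_const 3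
  have h3 := h2.log (by positivity)
  have h4 := (h1.const_mul (1/3 : ℝ)).sub (h3.const_mul (2/3 : ℝ))
  refine h4.congr_deriv ?_
  have h32 : s ^ ((3:ℝ)/2) = s * Real.sqrt s := by
    rw [show (3:ℝ)/2 = 1 + 1/2 by norm_num, Real.rpow_add hs, Real.rpow_one,
      ← Real.sqrt_eq_rpow]
  rw [h32]
  set r := Real.sqrt s with hrdef
  rw [show s = r * r from hr.symm]
  have hrne : r ≠ 0 := hrp.ne'
  field_simp
  ring

private lemma aux_tendsto_G :
    Tendsto (fun s : ℝ => (1/3) * Real.log s - (2/3) * Real.log (2 * Real.sqrt s + 3))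
      atTop (nhds (-(2/3) * Real.log 2)) := by
  have hsq : Tendsto Real.sqrt atTop atTop := by
    have := tendsto_rpow_atTop (y := (1/2 : ℝ)) (by norm_num)
    exact this.congr (fun x => (Real.sqrt_eq_rpow x).symm)
  have h0 : Tendsto (fun s : ℝ => 3 / Real.sqrt s) atTop (nhds 0) :=
    Tendsto.div_atTop tendsto_const_nhds hsq
  have h1 : Tendsto (fun s : ℝ => 2 + 3 / Real.sqrt s) atTop (nhds 2) := by
    simpa using tendsto_const_nhds.add h0
  have h2 : Tendsto (fun s : ℝ => -(2/3) * Real.log (2 + 3 / Real.sqrt s)) atTop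
      (nhds (-(2/3) * Real.log 2)) :=
    ((Real.continuousAt_log (by norm_num)).tendsto.comp h1).const_mul _
  refine h2.congr' ?_
  filter_upwards [eventually_gt_atTop (0:ℝ)] with s hs
  have hrp : 0 < Real.sqrt s := Real.sqrt_pos.2 hs
  have hpos : 0 < 2 + 3 / Real.sqrt s := by positivity
  have e1 : 2 * Real.sqrt s + 3 = Real.sqrt s * (2 + 3 / Real.sqrt s) := by
    field_simp
  rw [e1, Real.log_mul hrp.ne' hpos.ne', Real.log_sqrt hs.le]
  ring

set_option maxHeartbeats 1000000 in
theorem blowup_time_integral_lower_bound :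
    (∫ s in Set.Ioi (0 : ℝ), (2 * s ^ ((3 : ℝ) / 2) + 3 * s ^ ((2 : ℝ) / 3))⁻¹) >
      Real.sqrt (3 / 2) * Real.arctan (Real.sqrt (2 / 3)) + (2 / 3) * Real.log (5 / 2) := by
  set f : ℝ → ℝ := fun s => (2 * s ^ ((3:ℝ)/2) + 3 * s ^ ((2:ℝ)/3))⁻¹ with hfdef
  set g : ℝ → ℝ := fun s => (2 * s ^ ((4:ℝ)/3) + 3 * s ^ ((2:ℝ)/3))⁻¹ with hgdef
  set k : ℝ → ℝ := fun s => (2 * s ^ ((3:ℝ)/2) + 3 * s)⁻¹ with hkdef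
  -- basic positivity facts
  have hfpos : ∀ s : ℝ, 0 < s → 0 < f s := fun s hs => by
    have := Real.rpow_pos_of_pos hs ((3:ℝ)/2); have := Real.rpow_pos_of_pos hs ((2:ℝ)/3)
    positivity
  have hgpos : ∀ s : ℝ, 0 < s → 0 < g s := fun s hs => by
    have := Real.rpow_pos_of_pos hs ((4:ℝ)/3); have := Real.rpow_pos_of_pos hs ((2:ℝ)/3)
    positivity
  have hkpos : ∀ s : ℝ, 0 < s → 0 < k s := fun s hs => by
    have := Real.rpow_pos_of_pos hs ((3:ℝ)/2); positivity
  have hmf : Measurable f := by fun_prop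
  have hmg : Measurable g := by fun_prop
  -- integrable comparison functions
  have hb1 : IntegrableOn (fun s : ℝ => (1/3) * s ^ ((-((2:ℝ)/3)))) (Ioc 0 1) := by
    have := (intervalIntegral.intervalIntegrable_rpow' (a := 0) (b := 1)
      (r := (-((2:ℝ)/3))) (by norm_num))
    rw [intervalIntegrable_iff_integrableOn_Ioc_of_le (by norm_num)] at this
    exact this.const_mul _
  have hb2 : IntegrableOn (fun s : ℝ => (1/2) * s ^ ((-((3:ℝ)/2)))) (Ioi 1) :=
    (integrableOn_Ioi_rpow_of_lt (by norm_num) one_pos).const_mul _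
  -- integrability of f, g on (0,1]
  have key1 : ∀ s : ℝ, s ∈ Ioc (0:ℝ) 1 → f s ≤ (1/3) * s ^ ((-((2:ℝ)/3))) := by
    intro s hs
    have hb : (0:ℝ) < s ^ ((2:ℝ)/3) := Real.rpow_pos_of_pos hs.1 _
    have h32 : (0:ℝ) < s ^ ((3:ℝ)/2) := Real.rpow_pos_of_pos hs.1 _
    have : f s ≤ (3 * s ^ ((2:ℝ)/3))⁻¹ := by
      apply inv_anti₀ (by linarith); linarith
    calc f s ≤ (3 * s ^ ((2:ℝ)/3))⁻¹ := this
      _ = (1/3) * s ^ ((-((2:ℝ)/3))) := by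
          rw [Real.rpow_neg hs.1.le, mul_inv]; ring_nf
  have key1g : ∀ s : ℝ, s ∈ Ioc (0:ℝ) 1 → g s ≤ (1/3) * s ^ ((-((2:ℝ)/3))) := by
    intro s hs
    have hb : (0:ℝ) < s ^ ((2:ℝ)/3) := Real.rpow_pos_of_pos hs.1 _
    have h43 : (0:ℝ) < s ^ ((4:ℝ)/3) := Real.rpow_pos_of_pos hs.1 _
    have : g s ≤ (3 * s ^ ((2:ℝ)/3))⁻¹ := by
      apply inv_anti₀ (by linarith); linarith
    calc g s ≤ (3 * s ^ ((2:ℝ)/3))⁻¹ := this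
      _ = (1/3) * s ^ ((-((2:ℝ)/3))) := by
          rw [Real.rpow_neg hs.1.le, mul_inv]; ring_nf
  have hint_f1 : IntegrableOn f (Ioc 0 1) := by
    refine hb1.mono' (hmf.aestronglyMeasurable.restrict) ?_
    rw [ae_restrict_iff' measurableSet_Ioc]
    exact ae_of_all _ fun s hs => by
      rw [Real.norm_eq_abs, abs_of_pos (hfpos s hs.1)]; exact key1 s hs
  have hint_g1 : IntegrableOn g (Ioc 0 1) := by
    refine hb1.mono' (hmg.aestronglyMeasurable.restrict) ?_
    rw [ae_restrict_iff' measurableSet_Ioc]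
    exact ae_of_all _ fun s hs => by
      rw [Real.norm_eq_abs, abs_of_pos (hgpos s hs.1)]; exact key1g s hs
  -- integrability of f on (1,∞)
  have key2 : ∀ s : ℝ, s ∈ Ioi (1:ℝ) → f s ≤ (1/2) * s ^ ((-((3:ℝ)/2))) := by
    intro s hs
    have hs0 : (0:ℝ) < s := lt_trans one_pos hs
    have hb : (0:ℝ) < s ^ ((3:ℝ)/2) := Real.rpow_pos_of_pos hs0 _
    have h23 : (0:ℝ) < s ^ ((2:ℝ)/3) := Real.rpow_pos_of_pos hs0 _
    have : f s ≤ (2 * s ^ ((3:ℝ)/2))⁻¹ := by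
      apply inv_anti₀ (by linarith); linarith
    calc f s ≤ (2 * s ^ ((3:ℝ)/2))⁻¹ := this
      _ = (1/2) * s ^ ((-((3:ℝ)/2))) := by
          rw [Real.rpow_neg hs0.le, mul_inv]; ring_nf
  have hint_f2 : IntegrableOn f (Ioi 1) := by
    refine hb2.mono' (hmf.aestronglyMeasurable.restrict) ?_
    rw [ae_restrict_iff' measurableSet_Ioi]
    exact ae_of_all _ fun s hs => by
      rw [Real.norm_eq_abs, abs_of_pos (hfpos s (lt_trans one_pos hs))]; exact key2 s hs
  -- value of ∫ g over (0,1]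
  have hA : (∫ s in Ioc (0:ℝ) 1, g s) = Real.sqrt (3/2) * Real.arctan (Real.sqrt (2/3)) := by
    have hcont : ContinuousOn
        (fun x : ℝ => Real.sqrt (3/2) * Real.arctan (Real.sqrt (2/3) * x ^ ((1:ℝ)/3)))
        (Icc 0 1) := by
      apply Continuous.continuousOn
      have h13 : Continuous (fun x : ℝ => x ^ ((1:ℝ)/3)) :=
        Real.continuous_rpow_const (by norm_num)
      continuity
    have hderiv : ∀ x ∈ Ioo (0:ℝ) 1, HasDerivWithinAt
        (fun x : ℝ => Real.sqrt (3/2) * Real.arctan (Real.sqrt (2/3) * x ^ ((1:ℝ)/3)))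
        (g x) (Ioi x) x :=
      fun x hx => (aux_deriv_F x hx.1).hasDerivWithinAt
    have hint : IntervalIntegrable g volume 0 1 :=
      (intervalIntegrable_iff_integrableOn_Ioc_of_le zero_le_one).2 hint_g1
    have := intervalIntegral.integral_eq_sub_of_hasDeriv_right_of_le zero_le_one
      hcont hderiv hint
    rw [intervalIntegral.integral_of_le zero_le_one] at this
    rw [this, Real.one_rpow, mul_one, Real.zero_rpow (by norm_num), mul_zero,
      Real.arctan_zero, mul_zero, sub_zero]
  -- value of ∫ k over (1,∞), and its integrability
  have hderivG : ∀ x ∈ Ici (1:ℝ), HasDerivAt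
      (fun x : ℝ => (1/3) * Real.log x - (2/3) * Real.log (2 * Real.sqrt x + 3)) (k x) x :=
    fun x hx => aux_deriv_G x (lt_of_lt_of_le one_pos hx)
  have hkpos' : ∀ x ∈ Ioi (1:ℝ), 0 ≤ k x := fun x hx => (hkpos x (lt_trans one_pos hx)).le
  have hint_k : IntegrableOn k (Ioi 1) :=
    integrableOn_Ioi_deriv_of_nonneg' hderivG hkpos' aux_tendsto_G
  have hB : (∫ s in Ioi (1:ℝ), k s) = (2/3) * Real.log (5/2) := by
    rw [integral_Ioi_of_hasDerivAt_of_nonneg' hderivG hkpos' aux_tendsto_G]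
    rw [Real.log_one, Real.sqrt_one, Real.log_div (by norm_num) (by norm_num)]
    norm_num
    ring
  -- splitting the domain
  have hsplit : (∫ s in Ioi (0:ℝ), f s)
      = (∫ s in Ioc (0:ℝ) 1, f s) + ∫ s in Ioi (1:ℝ), f s := by
    rw [← setIntegral_union (Ioc_disjoint_Ioi le_rfl) measurableSet_Ioi hint_f1 hint_f2,
      Ioc_union_Ioi_eq_Ioi zero_le_one]
  -- pointwise comparisons
  have hle1 : ∀ s ∈ Ioc (0:ℝ) 1, g s ≤ f s := by
    intro s hs
    have h1 : s ^ ((3:ℝ)/2) ≤ s ^ ((4:ℝ)/3) :=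
      Real.rpow_le_rpow_of_exponent_ge hs.1 hs.2 (by norm_num)
    have hb : (0:ℝ) < s ^ ((3:ℝ)/2) := Real.rpow_pos_of_pos hs.1 _
    have hb2 : (0:ℝ) < s ^ ((2:ℝ)/3) := Real.rpow_pos_of_pos hs.1 _
    apply inv_anti₀ (by linarith)
    linarith
  have hlt1 : ∀ s ∈ Ioo (0:ℝ) 1, g s < f s := by
    intro s hs
    have h1 : s ^ ((3:ℝ)/2) < s ^ ((4:ℝ)/3) :=
      Real.rpow_lt_rpow_of_exponent_gt hs.1 hs.2 (by norm_num)
    have hb : (0:ℝ) < s ^ ((3:ℝ)/2) := Real.rpow_pos_of_pos hs.1 _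
    have hb2 : (0:ℝ) < s ^ ((2:ℝ)/3) := Real.rpow_pos_of_pos hs.1 _
    apply inv_strictAnti₀ (by linarith)
    linarith
  have hle2 : ∀ s ∈ Ioi (1:ℝ), k s ≤ f s := by
    intro s hs
    have hs0 : (0:ℝ) < s := lt_trans one_pos hs
    have h1 : s ^ ((2:ℝ)/3) ≤ s := by
      have := Real.rpow_le_rpow_of_exponent_le (le_of_lt hs) (by norm_num : (2:ℝ)/3 ≤ 1)
      rwa [Real.rpow_one] at this
    have hb : (0:ℝ) < s ^ ((3:ℝ)/2) := Real.rpow_pos_of_pos hs0 _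
    have hb2 : (0:ℝ) < s ^ ((2:ℝ)/3) := Real.rpow_pos_of_pos hs0 _
    apply inv_anti₀ (by linarith)
    linarith
  -- strict inequality on (0,1]
  have hstrict : (∫ s in Ioc (0:ℝ) 1, g s) < ∫ s in Ioc (0:ℝ) 1, f s := by
    have hnn : 0 ≤ᵐ[volume.restrict (Ioc (0:ℝ) 1)] (f - g) := by
      filter_upwards [ae_restrict_mem measurableSet_Ioc] with s hs
      simpa using sub_nonneg.2 (hle1 s hs)
    have hdiff : 0 < ∫ s in Ioc (0:ℝ) 1, (f - g) s := by
      rw [setIntegral_pos_iff_support_of_nonneg_ae hnn (hint_f1.sub hint_g1)]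
      have hsub : Ioo (0:ℝ) 1 ⊆ Function.support (f - g) ∩ Ioc 0 1 := by
        intro x hx
        refine ⟨?_, Ioo_subset_Ioc_self hx⟩
        show (f - g) x ≠ 0
        simpa [Pi.sub_apply, sub_eq_zero] using (hlt1 x hx).ne'
      have h0 : (0:ENNReal) < volume (Ioo (0:ℝ) 1) := by
        rw [Real.volume_Ioo]
        norm_num
      exact lt_of_lt_of_le h0 (measure_mono hsub)
    have heq : (∫ s in Ioc (0:ℝ) 1, (f - g) s)
        = (∫ s in Ioc (0:ℝ) 1, f s) - ∫ s in Ioc (0:ℝ) 1, g s := by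
      simp only [Pi.sub_apply]
      exact integral_sub hint_f1 hint_g1
    rw [heq] at hdiff
    linarith
  have hmono : (∫ s in Ioi (1:ℝ), k s) ≤ ∫ s in Ioi (1:ℝ), f s :=
    setIntegral_mono_on hint_k hint_f2 measurableSet_Ioi hle2
  rw [gt_iff_lt, ← hA, ← hB]
  calc (∫ s in Ioc (0:ℝ) 1, g s) + ∫ s in Ioi (1:ℝ), k s
      < (∫ s in Ioc (0:ℝ) 1, f s) + ∫ s in Ioi (1:ℝ), f s := by
        exact add_lt_add_of_lt_of_le hstrict hmono
    _ = ∫ s in Ioi (0:ℝ), f s := hsplit.symm
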